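/- arXiv:math/0411231 — 3 statements merged into one kernel-verified Lean document; each statement's English description precedes it below -/
import Mathlib

section
/- For all positive integers n and i, there exist a unique integer j with 1 ≤ j ≤ i and a unique strictly decreasing sequence of integers n_i > n_{i-1} > ... > n_j ≥ j such that n = C(n_i, i) + C(n_{i-1}, i-1) + ... + C(n_j, j), where C(a,b) denotes the binomial coefficient. -/
/-- `msucc i n` is Macaulay's `n^{<i>}`: from the `i`-binomial expansion
`n = C(n_i,i) + ... + C(n_j,j)` (computed greedily), replace each term
`C(n_k,k)` by `C(n_k+1,k+1)`.  By convention `msucc i 0 = 0` and `msucc 0 n = 0`. -/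
def msucc : ℕ → ℕ → ℕ
  | 0, _ => 0
  | _ + 1, 0 => 0
  | (i + 1), (n + 1) =>
      let m := Nat.findGreatest (fun k => Nat.choose k (i + 1) ≤ n + 1) (n + i + 2)
      Nat.choose (m + 1) (i + 2) + msucc i ((n + 1) - Nat.choose m (i + 1))

/-- An (infinite) O-sequence: starts with 1 and satisfies Macaulay's growth condition. -/
def IsOSeq (h : ℕ → ℕ) : Prop :=
  h 0 = 1 ∧ ∀ d, 1 ≤ d → h (d + 1) ≤ msucc d (h d)

/-- A finite O-sequence of length `d` (entries of degree `0,…,d`). -/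
def FinOSeq (g : ℕ → ℕ) (d : ℕ) : Prop :=
  g 0 = 1 ∧ ∀ k, 1 ≤ k → k + 1 ≤ d → g (k + 1) ≤ msucc k (g k)

/-- First difference of a sequence, with `(Diff h) 0 = 1`. -/
def Diff (h : ℕ → ℕ) : ℕ → ℕ := fun k => if k = 0 then 1 else h k - h (k - 1)

/-- An SI-sequence of socle degree `e`: symmetric and its first half is differentiable. -/
def IsSISeq (h : ℕ → ℕ) (e : ℕ) : Prop :=
  (∀ i ≤ e, h i = h (e - i)) ∧ FinOSeq (Diff h) (e / 2)

/-- Unimodality of `(h 0, …, h e)`. -/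
def Unimodal (h : ℕ → ℕ) (e : ℕ) : Prop :=
  ∃ m ≤ e, (∀ i j, i ≤ j → j ≤ m → h i ≤ h j) ∧ (∀ i j, m ≤ i → i ≤ j → j ≤ e → h j ≤ h i)



private def BValid (i n : ℕ) (p : ℕ × (ℕ → ℕ)) : Prop :=
  1 ≤ p.1 ∧ p.1 ≤ i ∧
  (∀ k, (k < p.1 ∨ i < k) → p.2 k = 0) ∧
  (∀ k, p.1 ≤ k → k < i → p.2 k < p.2 (k + 1)) ∧
  p.1 ≤ p.2 p.1 ∧
  n = ∑ k ∈ Finset.Icc p.1 i, Nat.choose (p.2 k) k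

private lemma choose_split (n k : ℕ) :
    Nat.choose (n + 1) (k + 1) = Nat.choose n k + Nat.choose n (k + 1) := by
  rw [Nat.choose_succ_succ]

private lemma choose_lb : ∀ m i : ℕ, 1 ≤ i → i ≤ m → m + 1 - i ≤ Nat.choose m i := by
  intro m
  induction m with
  | zero => intro i h1 h2; omega
  | succ m ih =>
    intro i h1 h2
    rcases Nat.lt_or_ge m i with h | h
    · have : i = m + 1 := by omega
      subst this; simp
    · obtain ⟨i', rfl⟩ : ∃ i', i = i' + 1 := ⟨i - 1, by omega⟩
      rw [choose_split]
      have h2 : 0 < Nat.choose m i' := Nat.choose_pos (by omega)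
      have h4 := ih (i' + 1) h1 h
      omega

private lemma k_le_ck {j i : ℕ} (c : ℕ → ℕ)
    (hmono : ∀ k, j ≤ k → k < i → c k < c (k + 1)) (hcj : j ≤ c j) :
    ∀ k, j ≤ k → k ≤ i → k ≤ c k := by
  intro k
  induction k with
  | zero => intro _ _; omega
  | succ k ih =>
    intro hjk hki
    rcases Nat.lt_or_ge j (k + 1) with h | h
    · have := ih (by omega) (by omega)
      have := hmono k (by omega) (by omega)
      omega
    · have hj : j = k + 1 := by omega
      subst hj; exact hcj

private lemma sum_lt : ∀ i j (c : ℕ → ℕ), 1 ≤ j → j ≤ i →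
    (∀ k, j ≤ k → k < i → c k < c (k + 1)) → j ≤ c j →
    ∑ k ∈ Finset.Icc j i, Nat.choose (c k) k < Nat.choose (c i + 1) i := by
  intro i
  induction i with
  | zero => intro j c h1 h2; omega
  | succ i ih =>
    intro j c h1 h2 hmono hcj
    rcases Nat.lt_or_ge i j with h | h
    · -- j = i + 1
      have hj : j = i + 1 := by omega
      subst hj
      rw [Finset.Icc_self, Finset.sum_singleton]
      rw [choose_split]
      have : 0 < Nat.choose (c (i + 1)) i := Nat.choose_pos (by omega)
      omega
    · rw [Finset.sum_Icc_succ_top (by omega)]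
      have hlt := ih j c h1 h (fun k hk1 hk2 => hmono k hk1 (by omega)) hcj
      have hci : c i + 1 ≤ c (i + 1) := hmono i h (by omega)
      have h2' : Nat.choose (c i + 1) i ≤ Nat.choose (c (i + 1)) i :=
        Nat.choose_le_choose i hci
      rw [choose_split]
      omega

private lemma choose_top_le {i n j : ℕ} {c : ℕ → ℕ} (h : BValid i n ⟨j, c⟩) :
    Nat.choose (c i) i ≤ n := by
  obtain ⟨h1, h2, h3, h4, h5, h6⟩ := h
  rw [h6]
  exact Finset.single_le_sum (f := fun k => Nat.choose (c k) k)
    (fun k _ => Nat.zero_le _) (Finset.mem_Icc.mpr ⟨h2, le_refl i⟩)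

private lemma top_eq {k a b n : ℕ}
    (ha1 : Nat.choose a k ≤ n) (ha2 : n < Nat.choose (a + 1) k)
    (hb1 : Nat.choose b k ≤ n) (hb2 : n < Nat.choose (b + 1) k) : a = b := by
  rcases lt_trichotomy a b with h | h | h
  · exact absurd (le_trans (Nat.choose_le_choose k h) hb1) (not_le.mpr ha2)
  · exact h
  · exact absurd (le_trans (Nat.choose_le_choose k h) ha1) (not_le.mpr hb2)

private lemma exists_bvalid : ∀ i, 0 < i → ∀ n, 0 < n → ∃ p, BValid i n p := by
  intro i
  induction i with
  | zero => intro h; omega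
  | succ i ih =>
    intro _ n hn
    set P : ℕ → Prop := fun k => Nat.choose k (i + 1) ≤ n with hP
    set m : ℕ := Nat.findGreatest P (n + i + 1) with hm
    have hPi : P (i + 1) := by simp [hP]; omega
    have him : i + 1 ≤ m := Nat.le_findGreatest (by omega) hPi
    have hPm : P m := Nat.findGreatest_spec (m := i + 1) (by omega) hPi
    have hle : Nat.choose m (i + 1) ≤ n := hPm
    have nlt : n < Nat.choose (m + 1) (i + 1) := by
      rcases Nat.lt_or_ge m (n + i + 1) with h | h
      · have := Nat.findGreatest_is_greatest (P := P) (n := n + i + 1) (k := m + 1)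
          (by omega) (by omega)
        simpa [hP] using this
      · have hmeq : m = n + i + 1 := le_antisymm (Nat.findGreatest_le _) h
        have := choose_lb (m + 1) (i + 1) (by omega) (by omega)
        omega
    rcases Nat.eq_or_lt_of_le hle with heq | hlt
    · -- n = choose m (i+1)
      refine ⟨⟨i + 1, fun k => if k = i + 1 then m else 0⟩, ?_, ?_, ?_, ?_, ?_, ?_⟩
      · omega
      · omega
      · intro k hk; simp only []; rw [if_neg (by omega)]
      · intro k hk1 hk2; omega
      · simpa using him
      · rw [Finset.Icc_self, Finset.sum_singleton]; simp [heq]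
    · -- remainder positive
      set r : ℕ := n - Nat.choose m (i + 1) with hr
      have hrpos : 0 < r := by omega
      have hi1 : 0 < i := by
        by_contra h
        have : i = 0 := by omega
        subst this
        simp only [Nat.zero_add, Nat.choose_one_right] at hle nlt hr
        omega
      obtain ⟨⟨j, c'⟩, hv⟩ := ih hi1 r hrpos
      obtain ⟨h1, h2, h3, h4, h5, h6⟩ := hv
      simp only [] at h1 h2 h3 h4 h5 h6
      have hclb : Nat.choose (c' i) i ≤ r := choose_top_le ⟨h1, h2, h3, h4, h5, h6⟩
      have hrlt : r < Nat.choose m i := by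
        have := choose_split m i
        omega
      have hcm : c' i < m := by
        by_contra h
        have := Nat.choose_le_choose i (le_of_not_gt h)
        omega
      refine ⟨⟨j, fun k => if k = i + 1 then m else c' k⟩, ?_, ?_, ?_, ?_, ?_, ?_⟩
      · exact h1
      · omega
      · intro k hk
        simp only []
        rw [if_neg (by omega)]
        exact h3 k (by omega)
      · intro k hk1 hk2
        simp only [] at hk1 hk2 ⊢
        rcases Nat.lt_or_ge k i with h | h
        · rw [if_neg (by omega), if_neg (by omega)]
          exact h4 k hk1 h
        · have : k = i := by omega
          subst this
          rw [if_neg (by omega), if_pos rfl]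
          exact hcm
      · simp only []; rw [if_neg (by omega)]; exact h5
      · rw [Finset.sum_Icc_succ_top (by omega)]
        dsimp only
        rw [if_pos rfl]
        have : ∑ k ∈ Finset.Icc j i,
            Nat.choose (if k = i + 1 then m else c' k) k
            = ∑ k ∈ Finset.Icc j i, Nat.choose (c' k) k := by
          apply Finset.sum_congr rfl
          intro k hk
          rw [Finset.mem_Icc] at hk
          rw [if_neg (by omega)]
        rw [this, ← h6]
        omega

private lemma bvalid_restrict {i n j : ℕ} {c : ℕ → ℕ}
    (h : BValid (i + 1) n ⟨j, c⟩) (hji : j ≤ i) :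
    BValid i (n - Nat.choose (c (i + 1)) (i + 1)) ⟨j, fun k => if k = i + 1 then 0 else c k⟩ := by
  obtain ⟨h1, h2, h3, h4, h5, h6⟩ := h
  simp only [] at h1 h2 h3 h4 h5 h6
  have hsum : n = (∑ k ∈ Finset.Icc j i, Nat.choose (c k) k)
      + Nat.choose (c (i + 1)) (i + 1) := by
    rw [h6, Finset.sum_Icc_succ_top (by omega)]
  refine ⟨h1, hji, ?_, ?_, ?_, ?_⟩
  · intro k hk
    simp only []
    rcases eq_or_ne k (i + 1) with rfl | hne
    · rw [if_pos rfl]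
    · rw [if_neg hne]
      exact h3 k (by omega)
  · intro k hk1 hk2
    simp only []
    rw [if_neg (by omega), if_neg (by omega)]
    exact h4 k hk1 (by omega)
  · simp only []; rw [if_neg (by omega)]; exact h5
  · simp only []
    have : ∑ k ∈ Finset.Icc j i, Nat.choose (if k = i + 1 then 0 else c k) k
        = ∑ k ∈ Finset.Icc j i, Nat.choose (c k) k := by
      apply Finset.sum_congr rfl
      intro k hk
      rw [Finset.mem_Icc] at hk
      rw [if_neg (by omega)]
    omega

private lemma bvalid_unique : ∀ i, ∀ n p q, BValid i n p → BValid i n q → p = q := by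
  intro i
  induction i with
  | zero => intro n p q hp _; obtain ⟨h1, h2, _⟩ := hp; omega
  | succ i ih =>
    rintro n ⟨j, c⟩ ⟨j', c'⟩ hp hq
    have hp' := hp
    have hq' := hq
    obtain ⟨hp1, hp2, hp3, hp4, hp5, hp6⟩ := hp'
    obtain ⟨hq1, hq2, hq3, hq4, hq5, hq6⟩ := hq'
    simp only [] at hp1 hp2 hp3 hp4 hp5 hp6 hq1 hq2 hq3 hq4 hq5 hq6
    -- top coefficients equal
    have hplt : n < Nat.choose (c (i + 1) + 1) (i + 1) := by
      rw [hp6]; exact sum_lt (i + 1) j c hp1 hp2 hp4 hp5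
    have hqlt : n < Nat.choose (c' (i + 1) + 1) (i + 1) := by
      rw [hq6]; exact sum_lt (i + 1) j' c' hq1 hq2 hq4 hq5
    have htop : c (i + 1) = c' (i + 1) :=
      top_eq (choose_top_le hp) hplt (choose_top_le hq) hqlt
    -- cases on whether j = i+1
    rcases Nat.eq_or_lt_of_le hp2 with hji | hji
    · -- j = i + 1, so n = choose (c (i+1)) (i+1)
      have hn : n = Nat.choose (c (i + 1)) (i + 1) := by
        rw [hp6, hji, Finset.Icc_self, Finset.sum_singleton]
      have hj' : j' = i + 1 := by
        by_contra h
        have hj'le : j' ≤ i := by omega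
        have hsum : n = (∑ k ∈ Finset.Icc j' i, Nat.choose (c' k) k)
            + Nat.choose (c' (i + 1)) (i + 1) := by
          rw [hq6, Finset.sum_Icc_succ_top (by omega)]
        have hpos : 0 < Nat.choose (c' j') j' := Nat.choose_pos hq5
        have : Nat.choose (c' j') j' ≤ ∑ k ∈ Finset.Icc j' i, Nat.choose (c' k) k :=
          Finset.single_le_sum (f := fun k => Nat.choose (c' k) k)
            (fun k _ => Nat.zero_le _) (Finset.mem_Icc.mpr ⟨le_refl j', hj'le⟩)
        rw [← htop] at hsum
        omega
      have hcc : c = c' := by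
        funext k
        rcases eq_or_ne k (i + 1) with rfl | hne
        · exact htop
        · rw [hp3 k (by omega), hq3 k (by omega)]
      rw [Prod.mk.injEq]
      exact ⟨hji.trans hj'.symm, hcc⟩
    · -- j ≤ i
      have hjle : j ≤ i := by omega
      have hj'le : j' ≤ i := by
        by_contra h
        have hj' : j' = i + 1 := by omega
        have hn : n = Nat.choose (c' (i + 1)) (i + 1) := by
          rw [hq6, hj', Finset.Icc_self, Finset.sum_singleton]
        have hsum : n = (∑ k ∈ Finset.Icc j i, Nat.choose (c k) k)
            + Nat.choose (c (i + 1)) (i + 1) := by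
          rw [hp6, Finset.sum_Icc_succ_top (by omega)]
        have hpos : 0 < Nat.choose (c j) j := Nat.choose_pos hp5
        have : Nat.choose (c j) j ≤ ∑ k ∈ Finset.Icc j i, Nat.choose (c k) k :=
          Finset.single_le_sum (f := fun k => Nat.choose (c k) k)
            (fun k _ => Nat.zero_le _) (Finset.mem_Icc.mpr ⟨le_refl j, hjle⟩)
        rw [htop] at hsum
        omega
      have hres := bvalid_restrict hp hjle
      have hres' := bvalid_restrict hq hj'le
      rw [← htop] at hres'
      have heq := ih _ _ _ hres hres'
      rw [Prod.mk.injEq] at heq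
      obtain ⟨hjj, hcc⟩ := heq
      have hcc' : c = c' := by
        funext k
        rcases eq_or_ne k (i + 1) with rfl | hne
        · exact htop
        · have := congrFun hcc k
          simpa [if_neg hne] using this
      rw [hjj, hcc']


/-- Existence and uniqueness of the `i`-binomial (Macaulay) expansion of `n`:
unique `j` with `1 ≤ j ≤ i` and unique strictly increasing (in the index)
values `c j < c (j+1) < … < c i` with `c j ≥ j` (normalized to `0` outside `[j,i]`)
such that `n = ∑_{k=j}^{i} C(c k, k)`. -/
theorem stmt0 (n i : ℕ) (hn : 0 < n) (hi : 0 < i) :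
    ∃! p : ℕ × (ℕ → ℕ),
      1 ≤ p.1 ∧ p.1 ≤ i ∧
      (∀ k, (k < p.1 ∨ i < k) → p.2 k = 0) ∧
      (∀ k, p.1 ≤ k → k < i → p.2 k < p.2 (k + 1)) ∧
      p.1 ≤ p.2 p.1 ∧
      n = ∑ k ∈ Finset.Icc p.1 i, Nat.choose (p.2 k) k := by
  obtain ⟨p, hp⟩ := exists_bvalid i hi n hn
  exact ⟨p, hp, fun q hq => bvalid_unique i n q p hq hp⟩
end

section
/- Let h = (h_0, h_1, h_2, ...) be an O-sequence with h_0 = 1 and h_1 ≤ 2. If h_i ≤ i for some i ≥ 1, then h_{i+1} ≤ h_i; consequently h_j ≤ h_i for all j ≥ i. -/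
lemma msucc_of_le : ∀ i n, n ≤ i → msucc i n = n := by
  intro i
  induction i with
  | zero => intro n hn; interval_cases n; rfl
  | succ i ih =>
    intro n hn
    match n with
    | 0 => rfl
    | n + 1 =>
      have hni : n ≤ i := Nat.lt_succ_iff.mp hn
      have hm : Nat.findGreatest (fun k => Nat.choose k (i + 1) ≤ n + 1) (n + i + 2) = i + 1 := by
        rw [Nat.findGreatest_eq_iff]
        refine ⟨by omega, fun _ => by simp, fun k hk hk2 hP => ?_⟩
        have h1 : Nat.choose (i + 2) (i + 1) ≤ Nat.choose k (i + 1) :=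
          Nat.choose_le_choose _ hk
        rw [Nat.choose_succ_self_right] at h1
        omega
      rw [msucc]
      simp only [hm]
      simp [Nat.choose_self, ih n hni]
      omega

/-- An O-sequence with `h 0 = 1`, `h 1 ≤ 2` which satisfies `h i ≤ i` for some `i ≥ 1`
is non-increasing from `i` on. -/
theorem stmt6 (h : ℕ → ℕ) (hO : IsOSeq h) (h1 : h 1 ≤ 2)
    (i : ℕ) (hi : 1 ≤ i) (hle : h i ≤ i) :
    h (i + 1) ≤ h i ∧ ∀ j, i ≤ j → h j ≤ h i := by
  have key : ∀ j, i ≤ j → h j ≤ h i ∧ h j ≤ j := by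
    intro j hj
    induction j, hj using Nat.le_induction with
    | base => exact ⟨le_rfl, hle⟩
    | succ j hj ih =>
      have hstep : h (j + 1) ≤ h j := by
        have := hO.2 j (le_trans hi hj)
        rwa [msucc_of_le j (h j) ih.2] at this
      exact ⟨le_trans hstep ih.1, by omega⟩
  exact ⟨(key (i + 1) (by omega)).1, fun j hj => (key j hj).1⟩
end

section
/- Let h = (h_0 = 1, h_1, ..., h_e) be a finite sequence of positive integers that is symmetric (h_i = h_{e-i} for all 0 ≤ i ≤ e), satisfies Macaulay's growth condition, and has h_1 = 2. Then h is an SI-sequence; explicitly, h_i = min(i+1, t, e-i+1) for some integer t, and in particular h is unimodal and the first difference of its first half is an O-sequence. -/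
lemma msucc_zero (d : ℕ) : msucc d 0 = 0 := by cases d <;> rfl

lemma msucc_self : ∀ d n, n ≤ d → msucc d n = n := by
  intro d
  induction d with
  | zero => intro n hn; interval_cases n; rfl
  | succ d ih =>
    intro n hn
    cases n with
    | zero => exact msucc_zero _
    | succ m =>
      have hm : m ≤ d := by omega
      have hfg : Nat.findGreatest (fun k => Nat.choose k (d + 1) ≤ m + 1) (m + d + 2) = d + 1 := by
        rw [Nat.findGreatest_eq_iff]
        refine ⟨by omega, fun _ => by simp, fun n hn1 hn2 hP => ?_⟩
        have : d + 2 ≤ Nat.choose n (d + 1) := by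
          calc d + 2 = Nat.choose (d + 2) (d + 1) := (Nat.choose_succ_self_right _).symm
          _ ≤ Nat.choose n (d + 1) := Nat.choose_le_choose _ (by omega)
        omega
      rw [msucc]
      simp only [hfg, Nat.choose_self, Nat.choose_succ_self_right]
      rw [Nat.add_sub_cancel, ih m hm]
      omega

lemma msucc_dsucc (d : ℕ) : msucc (d + 1) (d + 2) = d + 3 := by
  have hbig : d + 3 ≤ Nat.choose (d + 3) (d + 1) := by
    have hsymm : Nat.choose (d + 3) (d + 1) = Nat.choose (d + 3) 2 := by
      have := Nat.choose_symm (n := d + 3) (k := 2) (by omega)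
      simpa using this
    rw [hsymm, Nat.choose_two_right, Nat.le_div_iff_mul_le (by omega)]
    have h2 : d + 3 - 1 = d + 2 := by omega
    rw [h2]; nlinarith
  have hfg : Nat.findGreatest (fun k => Nat.choose k (d + 1) ≤ d + 1 + 1) (d + 1 + d + 2)
      = d + 2 := by
    rw [Nat.findGreatest_eq_iff]
    refine ⟨by omega, fun _ => by simp [Nat.choose_succ_self_right], fun n hn1 hn2 hP => ?_⟩
    have : Nat.choose (d + 3) (d + 1) ≤ Nat.choose n (d + 1) := Nat.choose_le_choose _ (by omega)
    omega
  rw [msucc]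
  simp only [hfg, Nat.choose_succ_self_right]
  rw [show d + 1 + 1 - (d + 2) = 0 from by omega, msucc_zero]

/-- Codimension 2 case of Stanley's theorem: a symmetric sequence of positive integers
with `h 0 = 1`, `h 1 = 2` satisfying Macaulay's growth condition is
`h i = min (i+1) (min t (e-i+1))` for some `t`; in particular it is unimodal and
an SI-sequence. -/
theorem stmt8 (e : ℕ) (he : 1 ≤ e) (h : ℕ → ℕ)
    (hpos : ∀ i ≤ e, 0 < h i) (h0 : h 0 = 1) (h1 : h 1 = 2)
    (hsym : ∀ i ≤ e, h i = h (e - i))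
    (hmac : ∀ d, 1 ≤ d → d + 1 ≤ e → h (d + 1) ≤ msucc d (h d)) :
    (∃ t : ℕ, ∀ i ≤ e, h i = min (i + 1) (min t (e - i + 1))) ∧
    Unimodal h e ∧ IsSISeq h e := by
  -- h d ≤ d + 1 for all d ≤ e
  have ha : ∀ d ≤ e, h d ≤ d + 1 := by
    intro d
    induction d with
    | zero => intro _; omega
    | succ d ih =>
      intro hde
      have hd : h d ≤ d + 1 := ih (by omega)
      rcases Nat.eq_zero_or_pos d with rfl | hd1
      · show h 1 ≤ 2; omega
      have hm := hmac d hd1 hde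
      rcases Nat.lt_or_ge (h d) (d + 1) with hlt | hge
      · rw [msucc_self d (h d) (by omega)] at hm; omega
      · have heq : h d = d + 1 := by omega
        obtain ⟨d', rfl⟩ : ∃ d', d = d' + 1 := ⟨d - 1, by omega⟩
        rw [heq, msucc_dsucc] at hm; omega
  -- nonincreasing once h i ≤ i
  have hni : ∀ j, j ≤ e → ∀ i, 1 ≤ i → i ≤ j → h i ≤ i → h j ≤ h i := by
    intro j
    induction j with
    | zero => intro _ i h1i h2i _; omega
    | succ j ih =>
      intro hje i h1i h2i hhi
      rcases Nat.eq_or_lt_of_le h2i with rfl | hlt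
      · exact le_refl _
      · have hji : h j ≤ h i := ih (by omega) i h1i (by omega) hhi
        have hm := hmac j (by omega) hje
        rw [msucc_self j (h j) (by omega)] at hm
        omega
  obtain ⟨s, hs1, hse, hsP, hsmax⟩ : ∃ s, 1 ≤ s ∧ s ≤ e ∧ h s = s + 1 ∧
      ∀ i, s < i → i ≤ e → h i ≠ i + 1 := by
    refine ⟨Nat.findGreatest (fun i => h i = i + 1) e, ?_, Nat.findGreatest_le e, ?_, ?_⟩
    · exact Nat.le_findGreatest he (show h 1 = 1 + 1 by omega)
    · exact Nat.findGreatest_spec (P := fun i => h i = i + 1) (m := 1) he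
        (show h 1 = 1 + 1 by omega)
    · intro i hi hie
      exact Nat.findGreatest_is_greatest (P := fun i => h i = i + 1) hi hie
  -- below s, h i = i + 1
  have hlow : ∀ i ≤ s, h i = i + 1 := by
    intro i hi
    by_contra hne
    rcases Nat.eq_zero_or_pos i with rfl | hi1
    · omega
    have hii : h i ≤ i := by have := ha i (by omega); omega
    have := hni s hse i hi1 hi hii
    omega
  have h2s : 2 * s ≤ e := by
    have h1 : h s = h (e - s) := hsym s hse
    have h2 : h (e - s) ≤ e - s + 1 := ha (e - s) (by omega)
    omega
  -- upper bound after s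
  have hup : ∀ i, s ≤ i → i ≤ e → h i ≤ s + 1 := by
    intro i hsi hie
    rcases Nat.eq_or_lt_of_le hsi with rfl | hlt
    · omega
    have hs1e : s + 1 ≤ e := by omega
    have hA : h (s + 1) ≤ s + 1 := by
      have := ha (s + 1) hs1e
      have := hsmax (s + 1) (by omega) hs1e
      omega
    have := hni i hie (s + 1) (by omega) (by omega) hA
    omega
  -- middle plateau
  have hmid : ∀ i, s ≤ i → i ≤ e - s → h i = s + 1 := by
    intro i hsi hies
    have hie : i ≤ e := by omega
    have hub := hup i hsi hie
    -- lower bound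
    rcases Nat.eq_or_lt_of_le hsi with rfl | hlt
    · omega
    have hii : h i ≤ i := by
      have := ha i hie
      have := hsmax i hlt hie
      omega
    have hes : h (e - s) ≤ h i := hni (e - s) (by omega) i (by omega) (by omega) hii
    have : h s = h (e - s) := hsym s hse
    omega
  -- the key formula
  have key : ∀ i ≤ e, h i = min (i + 1) (min (s + 1) (e - i + 1)) := by
    intro i hie
    rcases Nat.le_total i s with his | hsi
    · have := hlow i his
      omega
    rcases Nat.le_total i (e - s) with hi1 | hi2
    · have := hmid i hsi hi1
      omega
    · have h1 : h i = h (e - i) := hsym i hie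
      have h2 : h (e - i) = (e - i) + 1 := hlow (e - i) (by omega)
      omega
  refine ⟨⟨s + 1, key⟩, ⟨s, hse, ?_, ?_⟩, hsym, ?_, ?_⟩
  · intro i j hij hjs
    rw [key i (by omega), key j (by omega)]
    omega
  · intro i j hsi hij hje
    rw [key i (by omega), key j (by omega)]
    omega
  · simp [Diff]
  · intro k hk1 hke
    have hkd : 2 * (k + 1) ≤ e := by omega
    have hDk1 : Diff h (k + 1) = h (k + 1) - h k := by simp [Diff]
    have hDk : Diff h k = h k - h (k - 1) := by
      simp only [Diff]
      rw [if_neg (by omega)]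
    rcases Nat.lt_or_ge k s with hks' | hsk
    · have hks : k + 1 ≤ s := hks'
      have e1 : h (k + 1) = k + 2 := hlow (k + 1) hks
      have e2 : h k = k + 1 := hlow k (by omega)
      have e3 : h (k - 1) = k := by
        have := hlow (k - 1) (by omega)
        omega
      rw [hDk1, hDk, e1, e2, e3, show k + 2 - (k + 1) = 1 from by omega,
        show k + 1 - k = 1 from by omega, msucc_self k 1 hk1]
    · have e1 : h (k + 1) = s + 1 := hmid (k + 1) (by omega) (by omega)
      have e2 : h k = s + 1 := hmid k hsk (by omega)
      rw [hDk1, e1, e2]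
      simp
end
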